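/- Strict energy penalty of on-off transmission above the EE rate (equation (21)): If r_ee ≤ r̃ < r and l > 0, l̃ > 0 satisfy r·l = r̃·l̃ > 0, then (P(r) + ρ)·l > (P(r̃) + ρ)·l̃. That is, among strategies transmitting the same data amount at rates at least r_ee, the lower rate strictly reduces energy. -/

import Mathlib

open Real Finset

/-- Transmit-power function `P(r) = (e^r - 1)/g` for channel power gain `g`. -/
noncomputable def P (g r : ℝ) : ℝ := (Real.exp r - 1) / g

/-- Energy-efficiency (energy-per-bit) ratio `ξ(r) = (P(r) + ρ)/r`. -/
noncomputable def xi (g ρ r : ℝ) : ℝ := (P g r + ρ) / r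

/-- **Strict energy penalty of on-off transmission above the EE rate (equation (21)).**
If `r_ee ≤ r̃ < r` and `l, l̃ > 0` deliver the same data amount `r l = r̃ l̃ > 0`, then
`(P(r) + ρ) l > (P(r̃) + ρ) l̃`: among strategies transmitting the same data at rates at
least `r_ee`, the lower rate strictly reduces energy. -/
theorem energy_penalty_above_ree
    (g ρ ree : ℝ) (hg : 0 < g) (hρ : 0 < ρ)
    (hree_pos : 0 < ree)
    (hree_min : ∀ s : ℝ, 0 < s → s ≠ ree → xi g ρ ree < xi g ρ s)
    (rt r l lt : ℝ) (hrt : ree ≤ rt) (hlt_r : rt < r) (hl : 0 < l) (hlt : 0 < lt)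
    (hdata : r * l = rt * lt) (hpos : 0 < rt * lt) :
    (P g rt + ρ) * lt < (P g r + ρ) * l := by
  have hrtpos : 0 < rt := lt_of_lt_of_le hree_pos hrt
  have hrpos : 0 < r := lt_trans hrtpos hlt_r
  have hne : r ≠ ree := by linarith
  have hmin := hree_min r hrpos hne
  have hxi : (Real.exp ree - 1 + g * ρ) * r < (Real.exp r - 1 + g * ρ) * ree := by
    have h1 : xi g ρ ree = (Real.exp ree - 1 + g * ρ) / (g * ree) := by
      unfold xi P; field_simp
    have h2 : xi g ρ r = (Real.exp r - 1 + g * ρ) / (g * r) := by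
      unfold xi P; field_simp
    rw [h1, h2, div_lt_div_iff₀ (by positivity) (by positivity)] at hmin
    nlinarith
  -- Key: ξ(rt) < ξ(r), cross-multiplied.
  have hkey : (Real.exp rt - 1 + g * ρ) * r < (Real.exp r - 1 + g * ρ) * rt := by
    rcases eq_or_lt_of_le hrt with heq | hlt2
    · rw [← heq]; exact hxi
    · set a : ℝ := (r - rt) / (r - ree) with ha
      set b : ℝ := (rt - ree) / (r - ree) with hb
      have hden : 0 < r - ree := by linarith
      have hapos : 0 < a := by rw [ha]; exact div_pos (by linarith) hden
      have hbpos : 0 < b := by rw [hb]; exact div_pos (by linarith) hden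
      have hab : a + b = 1 := by rw [ha, hb]; field_simp; ring
      have hcomb : a * ree + b * r = rt := by rw [ha, hb]; field_simp; ring
      have hconv := strictConvexOn_exp.2 (Set.mem_univ ree) (Set.mem_univ r)
        (by linarith : ree ≠ r) hapos hbpos hab
      simp only [smul_eq_mul] at hconv
      rw [hcomb] at hconv
      have hc1 : Real.exp rt * r < (a * Real.exp ree + b * Real.exp r) * r :=
        mul_lt_mul_of_pos_right hconv hrpos
      have h2 : (Real.exp rt - 1 + g * ρ) * r <
          a * ((Real.exp ree - 1 + g * ρ) * r) + b * ((Real.exp r - 1 + g * ρ) * r) := by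
        have e : a * ((Real.exp ree - 1 + g * ρ) * r) + b * ((Real.exp r - 1 + g * ρ) * r)
            = (a * Real.exp ree + b * Real.exp r) * r + (a + b) * (g * ρ - 1) * r := by ring
        rw [e, hab]; linarith
      have h3 : a * ((Real.exp ree - 1 + g * ρ) * r) < a * ((Real.exp r - 1 + g * ρ) * ree) :=
        mul_lt_mul_of_pos_left hxi hapos
      have h4 : a * ((Real.exp r - 1 + g * ρ) * ree) + b * ((Real.exp r - 1 + g * ρ) * r)
          = (Real.exp r - 1 + g * ρ) * rt := by rw [← hcomb]; ring
      linarith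
  -- Convert to energies using equal data.
  have hPrt : P g rt + ρ = (Real.exp rt - 1 + g * ρ) / g := by
    unfold P; field_simp
  have hPr : P g r + ρ = (Real.exp r - 1 + g * ρ) / g := by
    unfold P; field_simp
  rw [hPrt, hPr, div_mul_eq_mul_div, div_mul_eq_mul_div, div_lt_div_iff₀ hg hg]
  have h5 : ((Real.exp r - 1 + g * ρ) * rt) * (lt * g) = ((Real.exp r - 1 + g * ρ) * l * g) * r := by
    linear_combination (-(Real.exp r - 1 + g * ρ) * g) * hdata
  have h6 := mul_lt_mul_of_pos_right hkey (mul_pos hlt hg)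
  rw [h5] at h6
  have h7 : ((Real.exp rt - 1 + g * ρ) * lt * g) * r = ((Real.exp rt - 1 + g * ρ) * r) * (lt * g) := by
    ring
  exact (mul_lt_mul_iff_of_pos_right hrpos).mp (by rw [h7]; exact h6)
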